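/- Let σ ∈ S_k and τ ∈ S_ℓ with n = k + ℓ, let σ/τ be the concatenation of σ with the word τ̄ (obtained by adding k to each letter of τ), and σ\τ the concatenation of τ̄ with σ. Then a permutation ρ ∈ S_n is a shuffle of σ and τ̄ if and only if σ/τ ≤ ρ ≤ σ\τ in the right weak Bruhat order on S_n. -/

import Mathlib

/-- `u` is the one-line word of a permutation of `{1, …, n}`. -/
def IsPermWord (n : ℕ) (u : List ℕ) : Prop := u.Perm (List.range' 1 n)

/-- The left inversion set of a word `u`:
pairs `(i, j)` of letters of `u` with `i < j` such that `j` occurs before `i` in `u`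
(i.e. `u⁻¹(i) > u⁻¹(j)`). -/
def InvW (u : List ℕ) : Set (ℕ × ℕ) :=
  {p | p.1 < p.2 ∧ p.1 ∈ u ∧ p.2 ∈ u ∧ u.idxOf p.2 < u.idxOf p.1}

/-- The left descent set of a word: letters `i` such that `i + 1` occurs before `i`. -/
def DesLW (u : List ℕ) : Set ℕ :=
  {i | i ∈ u ∧ i + 1 ∈ u ∧ u.idxOf (i + 1) < u.idxOf i}

/-- The covering relation of the right weak Bruhat order on one-line words:
`w = u · sᵢ` where the letters in positions `i, i+1` of `u` are increasing. -/
def WeakCovW (u w : List ℕ) : Prop :=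
  ∃ (l₁ l₂ : List ℕ) (x y : ℕ), x < y ∧ u = l₁ ++ x :: y :: l₂ ∧ w = l₁ ++ y :: x :: l₂

open List

/-- A sublist of a duplicate-free list preserves the relative order of its elements. -/
theorem before_sublist {s u : List ℕ} (h : s <+ u) :
    u.Nodup → ∀ i j, i ∈ s → j ∈ s →
      (s.idxOf i < s.idxOf j ↔ u.idxOf i < u.idxOf j) := by
  induction h with
  | slnil => intro _ i j hi hj; simp at hi
  | @cons l₁ l₂ a h ih =>
    intro hu i j hi hj
    have ha : a ∉ l₂ := (nodup_cons.mp hu).1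
    rw [idxOf_cons_ne _ (fun e => ha (by rw [e]; exact h.subset hi)),
        idxOf_cons_ne _ (fun e => ha (by rw [e]; exact h.subset hj)), Nat.succ_lt_succ_iff]
    exact ih (nodup_cons.mp hu).2 i j hi hj
  | @cons_cons l₁ l₂ a h ih =>
    intro hu i j hi hj
    have ha2 : a ∉ l₂ := (nodup_cons.mp hu).1
    by_cases hia : i = a
    · subst hia
      by_cases hja : j = i
      · subst hja; simp
      · have hj1 : j ∈ l₁ := by
          rcases mem_cons.mp hj with h' | h'
          · exact absurd h' hja
          · exact h'
        rw [idxOf_cons_self, idxOf_cons_self,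
            idxOf_cons_ne _ (fun e => hja e.symm),
            idxOf_cons_ne _ (fun e => hja e.symm)]
        simp
    · by_cases hja : j = a
      · subst hja
        rw [idxOf_cons_self, idxOf_cons_self,
            idxOf_cons_ne _ (fun e => hia e.symm),
            idxOf_cons_ne _ (fun e => hia e.symm)]
        simp
      · have hi1 : i ∈ l₁ := by
          rcases mem_cons.mp hi with h' | h'
          · exact absurd h' hia
          · exact h'
        have hj1 : j ∈ l₁ := by
          rcases mem_cons.mp hj with h' | h'
          · exact absurd h' hja
          · exact h'
        rw [idxOf_cons_ne _ (fun e => hia e.symm),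
            idxOf_cons_ne _ (fun e => hja e.symm),
            idxOf_cons_ne _ (fun e => hia e.symm),
            idxOf_cons_ne _ (fun e => hja e.symm),
            Nat.succ_lt_succ_iff, Nat.succ_lt_succ_iff]
        exact ih (nodup_cons.mp hu).2 i j hi1 hj1

/-- A duplicate-free list is determined by its multiset of elements together with the
relative order of its elements. -/
theorem eq_of_before (u : List ℕ) :
    u.Nodup → ∀ v : List ℕ, v ~ u →
      (∀ i j, i ∈ u → j ∈ u → (u.idxOf i < u.idxOf j ↔ v.idxOf i < v.idxOf j)) →
      u = v := by
  induction u with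
  | nil =>
    intro _ v hv _
    have := hv.length_eq
    cases v with
    | nil => rfl
    | cons y v' => simp at this
  | cons x u ih =>
    intro hu v hv hb
    have hxu : x ∉ u := (nodup_cons.mp hu).1
    cases v with
    | nil => have := hv.length_eq; simp at this
    | cons y v' =>
      have hxy : y = x := by
        by_contra hne
        have hyv : y ∈ x :: u := hv.subset mem_cons_self
        have h1 : (x :: u).idxOf x < (x :: u).idxOf y := by
          rw [idxOf_cons_self, idxOf_cons_ne _ (fun e => hne e.symm)]
          exact Nat.succ_pos _
        have h2 := (hb x y mem_cons_self hyv).mp h1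
        rw [idxOf_cons_self] at h2
        exact absurd h2 (Nat.not_lt_zero _)
      subst hxy
      have hv' : v' ~ u := (perm_cons y).mp hv
      have : u = v' := by
        refine ih (nodup_cons.mp hu).2 v' hv' ?_
        intro i j hi hj
        have hiy : y ≠ i := fun e => hxu (e ▸ hi)
        have hjy : y ≠ j := fun e => hxu (e ▸ hj)
        have := hb i j (mem_cons_of_mem _ hi) (mem_cons_of_mem _ hj)
        rwa [idxOf_cons_ne _ hiy, idxOf_cons_ne _ hjy,
             idxOf_cons_ne _ hiy, idxOf_cons_ne _ hjy,
             Nat.succ_lt_succ_iff, Nat.succ_lt_succ_iff] at this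
      rw [this]

/-- Let `σ ∈ S_k`, `τ ∈ S_ℓ`, `n = k + ℓ`, and let `τ̄` be `τ` with `k`
added to each letter. A permutation `ρ ∈ Sₙ` is a shuffle of `σ` and `τ̄` (its subword on
letters `≤ k` is `σ` and its subword on letters `> k` is `τ̄`) if and only if
`σ/τ ≤ ρ ≤ σ\τ` in the right weak Bruhat order, where `σ/τ = σ·τ̄` and `σ\τ = τ̄·σ`
are the two concatenations. -/
theorem shuffles_are_weak_order_interval (k l : ℕ) (σ τ ρ : List ℕ)
    (hσ : IsPermWord k σ) (hτ : IsPermWord l τ) (hρ : IsPermWord (k + l) ρ) :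
    (ρ.filter (fun v => decide (v ≤ k)) = σ ∧
        ρ.filter (fun v => decide (k < v)) = τ.map (· + k)) ↔
      (InvW (σ ++ τ.map (· + k)) ⊆ InvW ρ ∧ InvW ρ ⊆ InvW (τ.map (· + k) ++ σ)) := by
  have hσ' : σ ~ List.range' 1 k := hσ
  have hτ' : τ ~ List.range' 1 l := hτ
  have hρ' : ρ ~ List.range' 1 (k + l) := hρ
  set t : List ℕ := τ.map (· + k) with ht
  -- membership characterizations
  have memσ : ∀ x, x ∈ σ ↔ 1 ≤ x ∧ x ≤ k := by
    intro x; rw [hσ'.mem_iff, mem_range'_1]; omega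
  have memt : ∀ x, x ∈ t ↔ k + 1 ≤ x ∧ x ≤ k + l := by
    intro x
    simp only [ht, List.mem_map]
    constructor
    · rintro ⟨y, hy, rfl⟩
      have := mem_range'_1.mp (hτ'.mem_iff.mp hy); omega
    · rintro ⟨h1, h2⟩
      exact ⟨x - k, hτ'.mem_iff.mpr (mem_range'_1.mpr ⟨by omega, by omega⟩), by omega⟩
  have memρ : ∀ x, x ∈ ρ ↔ 1 ≤ x ∧ x ≤ k + l := by
    intro x; rw [hρ'.mem_iff, mem_range'_1]; omega
  have notT : ∀ x, x ∈ σ → x ∉ t := by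
    intro x hx e
    have := (memσ x).mp hx; have := (memt x).mp e; omega
  have notS : ∀ x, x ∈ t → x ∉ σ := by
    intro x hx e
    have := (memσ x).mp e; have := (memt x).mp hx; omega
  have hρn : ρ.Nodup := hρ'.nodup_iff.mpr (nodup_range' (s := 1) (n := k + l))
  have hσn : σ.Nodup := hσ'.nodup_iff.mpr (nodup_range' (s := 1) (n := k))
  have htn : t.Nodup := by
    refine (hτ'.nodup_iff.mpr (nodup_range' (s := 1) (n := l))).map ?_
    intro a b h; simpa using h
  -- perm facts for the filters
  have hrs : List.range' 1 (k + l) = List.range' 1 k ++ List.range' (1 + k) l := by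
    have := List.range'_append (s := 1) (m := k) (n := l) (step := 1)
    simp only [one_mul] at this
    rw [← this]
  have hperm1 : ρ.filter (fun v => decide (v ≤ k)) ~ σ := by
    have h1 := hρ'.filter (fun v => decide (v ≤ k))
    have e : (List.range' 1 (k + l)).filter (fun v => decide (v ≤ k)) = List.range' 1 k := by
      rw [hrs, List.filter_append,
          List.filter_eq_self.mpr (fun a ha => by
            have := mem_range'_1.mp ha; simp; omega),
          List.filter_eq_nil_iff.mpr (fun a ha => by
            have := mem_range'_1.mp ha; simp; omega),
          append_nil]
    rw [e] at h1
    exact h1.trans hσ'.symm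
  have htperm : t ~ List.range' (1 + k) l := by
    have e1 : t = List.map (fun x => k + x) τ :=
      List.map_congr_left (fun a _ => add_comm a k)
    rw [e1]
    have := hτ'.map (fun x => k + x)
    rwa [List.map_add_range', add_comm k 1] at this
  have hperm2 : ρ.filter (fun v => decide (k < v)) ~ t := by
    have h1 := hρ'.filter (fun v => decide (k < v))
    have e : (List.range' 1 (k + l)).filter (fun v => decide (k < v))
        = List.range' (1 + k) l := by
      rw [hrs, List.filter_append,
          List.filter_eq_nil_iff.mpr (fun a ha => by
            have := mem_range'_1.mp ha; simp; omega),
          List.filter_eq_self.mpr (fun a ha => by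
            have := mem_range'_1.mp ha; simp; omega),
          nil_append]
    rw [e] at h1
    exact h1.trans htperm.symm
  -- filter order transfer
  have filt1 : ∀ i j, i ∈ ρ → j ∈ ρ → i ≤ k → j ≤ k →
      ((ρ.filter (fun v => decide (v ≤ k))).idxOf i <
        (ρ.filter (fun v => decide (v ≤ k))).idxOf j ↔ ρ.idxOf i < ρ.idxOf j) := by
    intro i j hi hj hik hjk
    exact before_sublist (filter_sublist (l := ρ)) hρn i j
      (mem_filter.mpr ⟨hi, by simpa using hik⟩) (mem_filter.mpr ⟨hj, by simpa using hjk⟩)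
  have filt2 : ∀ i j, i ∈ ρ → j ∈ ρ → k < i → k < j →
      ((ρ.filter (fun v => decide (k < v))).idxOf i <
        (ρ.filter (fun v => decide (k < v))).idxOf j ↔ ρ.idxOf i < ρ.idxOf j) := by
    intro i j hi hj hik hjk
    exact before_sublist (filter_sublist (l := ρ)) hρn i j
      (mem_filter.mpr ⟨hi, by simpa using hik⟩) (mem_filter.mpr ⟨hj, by simpa using hjk⟩)
  constructor
  · rintro ⟨h1, h2⟩
    constructor
    · rintro ⟨i, j⟩ ⟨hij, hi, hj, hidx⟩
      simp only at hij hidx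
      rw [mem_append] at hi hj
      rcases hi with hiσ | hit
      · rcases hj with hjσ | hjt
        · have hi' := (memσ i).mp hiσ
          have hj' := (memσ j).mp hjσ
          have hiρ : i ∈ ρ := (memρ i).mpr ⟨hi'.1, by omega⟩
          have hjρ : j ∈ ρ := (memρ j).mpr ⟨hj'.1, by omega⟩
          rw [idxOf_append_of_mem hjσ, idxOf_append_of_mem hiσ] at hidx
          refine ⟨hij, hiρ, hjρ, ?_⟩
          have := filt1 j i hjρ hiρ hj'.2 hi'.2
          rw [h1] at this
          exact this.mp hidx
        · exfalso
          have hlt := idxOf_lt_length_iff.mpr hiσ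
          rw [idxOf_append_of_mem hiσ,
              idxOf_append_of_notMem (notS j hjt)] at hidx
          omega
      · rcases hj with hjσ | hjt
        · exfalso
          have := (memt i).mp hit; have := (memσ j).mp hjσ; omega
        · have hi' := (memt i).mp hit
          have hj' := (memt j).mp hjt
          have hiρ : i ∈ ρ := (memρ i).mpr ⟨by omega, hi'.2⟩
          have hjρ : j ∈ ρ := (memρ j).mpr ⟨by omega, hj'.2⟩
          rw [idxOf_append_of_notMem (notS i hit),
              idxOf_append_of_notMem (notS j hjt)] at hidx
          refine ⟨hij, hiρ, hjρ, ?_⟩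
          have := filt2 j i hjρ hiρ (by omega) (by omega)
          rw [h2] at this
          exact this.mp (by omega)
    · rintro ⟨i, j⟩ ⟨hij, hi, hj, hidx⟩
      simp only at hij hidx
      have hi' := (memρ i).mp hi
      have hj' := (memρ j).mp hj
      by_cases hik : i ≤ k
      · by_cases hjk : j ≤ k
        · have hiσ : i ∈ σ := (memσ i).mpr ⟨hi'.1, hik⟩
          have hjσ : j ∈ σ := (memσ j).mpr ⟨hj'.1, hjk⟩
          have hs : σ.idxOf j < σ.idxOf i := by
            have := filt1 j i hj hi hjk hik
            rw [h1] at this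
            exact this.mpr hidx
          refine ⟨hij, mem_append.mpr (Or.inr hiσ), mem_append.mpr (Or.inr hjσ), ?_⟩
          rw [idxOf_append_of_notMem (notT i hiσ),
              idxOf_append_of_notMem (notT j hjσ)]
          omega
        · have hjt : j ∈ t := (memt j).mpr ⟨by omega, hj'.2⟩
          have hiσ : i ∈ σ := (memσ i).mpr ⟨hi'.1, hik⟩
          refine ⟨hij, mem_append.mpr (Or.inr hiσ), mem_append.mpr (Or.inl hjt), ?_⟩
          rw [idxOf_append_of_mem hjt, idxOf_append_of_notMem (notT i hiσ)]
          have := idxOf_lt_length_iff.mpr hjt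
          omega
      · by_cases hjk : j ≤ k
        · omega
        · have hit : i ∈ t := (memt i).mpr ⟨by omega, hi'.2⟩
          have hjt : j ∈ t := (memt j).mpr ⟨by omega, hj'.2⟩
          have hs : t.idxOf j < t.idxOf i := by
            have := filt2 j i hj hi (by omega) (by omega)
            rw [h2] at this
            exact this.mpr hidx
          refine ⟨hij, mem_append.mpr (Or.inl hit), mem_append.mpr (Or.inl hjt), ?_⟩
          rw [idxOf_append_of_mem hit, idxOf_append_of_mem hjt]
          exact hs
  · rintro ⟨hAB, hBC⟩
    -- key order-transfer claims
    have key1 : ∀ i j, i ∈ σ → j ∈ σ → i < j →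
        (σ.idxOf j < σ.idxOf i ↔ ρ.idxOf j < ρ.idxOf i) := by
      intro i j hi hj hij
      have hi' := (memσ i).mp hi
      have hj' := (memσ j).mp hj
      have hiρ : i ∈ ρ := (memρ i).mpr ⟨hi'.1, by omega⟩
      have hjρ : j ∈ ρ := (memρ j).mpr ⟨hj'.1, by omega⟩
      constructor
      · intro h
        have hmem : (i, j) ∈ InvW (σ ++ t) := by
          refine ⟨hij, mem_append.mpr (Or.inl hi), mem_append.mpr (Or.inl hj), ?_⟩
          rw [idxOf_append_of_mem hj, idxOf_append_of_mem hi]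
          exact h
        exact (hAB hmem).2.2.2
      · intro h
        have hmem : (i, j) ∈ InvW ρ := ⟨hij, hiρ, hjρ, h⟩
        have h4 := (hBC hmem).2.2.2
        rw [idxOf_append_of_notMem (notT i hi),
            idxOf_append_of_notMem (notT j hj)] at h4
        omega
    have key2 : ∀ i j, i ∈ t → j ∈ t → i < j →
        (t.idxOf j < t.idxOf i ↔ ρ.idxOf j < ρ.idxOf i) := by
      intro i j hi hj hij
      have hi' := (memt i).mp hi
      have hj' := (memt j).mp hj
      have hiρ : i ∈ ρ := (memρ i).mpr ⟨by omega, hi'.2⟩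
      have hjρ : j ∈ ρ := (memρ j).mpr ⟨by omega, hj'.2⟩
      constructor
      · intro h
        have hmem : (i, j) ∈ InvW (σ ++ t) := by
          refine ⟨hij, mem_append.mpr (Or.inr hi), mem_append.mpr (Or.inr hj), ?_⟩
          rw [idxOf_append_of_notMem (notS i hi),
              idxOf_append_of_notMem (notS j hj)]
          omega
        exact (hAB hmem).2.2.2
      · intro h
        have hmem : (i, j) ∈ InvW ρ := ⟨hij, hiρ, hjρ, h⟩
        have h4 := (hBC hmem).2.2.2
        rwa [idxOf_append_of_mem hi, idxOf_append_of_mem hj] at h4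
    -- full "before" equivalences
    have bef1 : ∀ i j, i ∈ σ → j ∈ σ →
        (σ.idxOf i < σ.idxOf j ↔
          (ρ.filter (fun v => decide (v ≤ k))).idxOf i <
            (ρ.filter (fun v => decide (v ≤ k))).idxOf j) := by
      intro i j hi hj
      have hi' := (memσ i).mp hi
      have hj' := (memσ j).mp hj
      have hiρ : i ∈ ρ := (memρ i).mpr ⟨hi'.1, by omega⟩
      have hjρ : j ∈ ρ := (memρ j).mpr ⟨hj'.1, by omega⟩
      rw [filt1 i j hiρ hjρ hi'.2 hj'.2]
      rcases lt_trichotomy i j with h | h | h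
      · have k1 := key1 i j hi hj h
        have ne1 : σ.idxOf i ≠ σ.idxOf j :=
          fun e => absurd ((List.idxOf_inj hi).mp e) (by omega)
        have ne2 : ρ.idxOf i ≠ ρ.idxOf j :=
          fun e => absurd ((List.idxOf_inj hiρ).mp e) (by omega)
        constructor
        · intro hlt
          by_contra hnot
          have : ρ.idxOf j < ρ.idxOf i := by omega
          have := k1.mpr this
          omega
        · intro hlt
          by_contra hnot
          have : σ.idxOf j < σ.idxOf i := by omega
          have := k1.mp this
          omega
      · subst h; simp
      · exact key1 j i hj hi h
    have bef2 : ∀ i j, i ∈ t → j ∈ t →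
        (t.idxOf i < t.idxOf j ↔
          (ρ.filter (fun v => decide (k < v))).idxOf i <
            (ρ.filter (fun v => decide (k < v))).idxOf j) := by
      intro i j hi hj
      have hi' := (memt i).mp hi
      have hj' := (memt j).mp hj
      have hiρ : i ∈ ρ := (memρ i).mpr ⟨by omega, hi'.2⟩
      have hjρ : j ∈ ρ := (memρ j).mpr ⟨by omega, hj'.2⟩
      rw [filt2 i j hiρ hjρ (by omega) (by omega)]
      rcases lt_trichotomy i j with h | h | h
      · have k1 := key2 i j hi hj h
        have ne1 : t.idxOf i ≠ t.idxOf j :=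
          fun e => absurd ((List.idxOf_inj hi).mp e) (by omega)
        have ne2 : ρ.idxOf i ≠ ρ.idxOf j :=
          fun e => absurd ((List.idxOf_inj hiρ).mp e) (by omega)
        constructor
        · intro hlt
          by_contra hnot
          have : ρ.idxOf j < ρ.idxOf i := by omega
          have := k1.mpr this
          omega
        · intro hlt
          by_contra hnot
          have : t.idxOf j < t.idxOf i := by omega
          have := k1.mp this
          omega
      · subst h; simp
      · exact key2 j i hj hi h
    exact ⟨(eq_of_before σ hσn _ hperm1 bef1).symm,
           (eq_of_before t htn _ hperm2 bef2).symm⟩
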